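/- Fix β̂ > 0. There exist constants c₀ = c₀(β̂) > 0 and c₁ = c₁(β̂) > 0 such that for all N large and all integers q ≥ 2 with q² ≥ c₁ (log N)², the q-th moment of the polymer partition function satisfies E[W_N^q] ≥ exp(c₀ · (q choose 2) · N / log N). -/

import Mathlib

open MeasureTheory ProbabilityTheory

/-- The possible steps `±e_i` of the simple random walk on `ℤ^d`. -/
def srwStep (d : ℕ) (s : Fin d × Bool) : Fin d → ℤ :=
  fun j => if j = s.1 then (if s.2 then 1 else -1) else 0

/-- `srwP d n x` = `P_0(S_n = x)` for simple random walk on `ℤ^d`. -/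
noncomputable def srwP (d : ℕ) : ℕ → (Fin d → ℤ) → ℝ
  | 0, x => if x = 0 then 1 else 0
  | n + 1, x => (∑ s : Fin d × Bool, srwP d n (x - srwStep d s)) / (2 * d)

/-- The expected number of intersections of two independent 2D simple random walks up to
time `N`: `R_N = E_0^{⊗2}[∑_{n=1}^N 1_{S^1_n = S^2_n}] = ∑_{n=1}^N p_{2n}(0)`. -/
noncomputable def Rfun (N : ℕ) : ℝ := ∑ n ∈ Finset.Icc 1 N, srwP 2 (2 * n) 0

/-- The four nearest-neighbour steps of the simple random walk on `ℤ²`. -/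
def step4 : Fin 4 → ℤ × ℤ := ![(1, 0), (-1, 0), (0, 1), (0, -1)]

/-- Position at time `n` of the walk encoded by the step sequence `σ` (started at `0`). -/
def pathPos {N : ℕ} (σ : Fin N → Fin 4) (n : ℕ) : ℤ × ℤ :=
  ∑ k : Fin N, if (k : ℕ) < n then step4 (σ k) else 0

/-- The normalized partition function `W_N` of the 2D directed polymer in the
environment `η`, at inverse temperature `β`. -/
noncomputable def polymerW (N : ℕ) (β : ℝ) (η : ℕ × ℤ × ℤ → ℝ) : ℝ :=
  (∑ σ : Fin N → Fin 4,
      Real.exp ((∑ n ∈ Finset.range N, β * η (n + 1, pathPos σ (n + 1))) - N * β ^ 2 / 2))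
    / 4 ^ N

/-! ### Auxiliary lemmas: 1D walk distribution -/

/-- probability that a ±1 walk of length `n` is at `k`. -/
noncomputable def gg (n : ℕ) (k : ℤ) : ℝ :=
  if (↑n + k) % 2 = 0 ∧ -(n:ℤ) ≤ k then (n.choose ((↑n + k).toNat / 2) : ℝ) / 2^n else 0

lemma gg_zero (k : ℤ) : gg 0 k = if k = 0 then 1 else 0 := by
  unfold gg
  rcases eq_or_ne k 0 with rfl | hk
  · norm_num
  · rw [if_neg hk]
    by_cases h : (↑(0:ℕ) + k) % 2 = 0 ∧ -((0:ℕ):ℤ) ≤ k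
    · rw [if_pos h]
      have hm : 1 ≤ ((↑(0:ℕ) + k).toNat / 2) := by omega
      have : (0:ℕ).choose ((↑(0:ℕ) + k).toNat / 2) = 0 := Nat.choose_eq_zero_of_lt (by omega)
      rw [this]; norm_num
    · rw [if_neg h]

lemma gg_rec (n : ℕ) (k : ℤ) : gg (n+1) k = (gg n (k-1) + gg n (k+1)) / 2 := by
  unfold gg
  by_cases hpar : (↑n + 1 + k) % 2 = 0
  · by_cases hrange : -(n:ℤ) + 1 ≤ k
    · obtain ⟨m, hm, hm1⟩ : ∃ m : ℕ, (↑n + 1 + k) = 2*m ∧ 1 ≤ m :=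
        ⟨(↑n + 1 + k).toNat / 2, by omega, by omega⟩
      obtain ⟨m', rfl⟩ : ∃ m', m = m' + 1 := ⟨m - 1, by omega⟩
      have h1 : ((↑(n+1):ℤ) + k).toNat / 2 = m' + 1 := by push_cast; omega
      have h2 : ((↑n:ℤ) + (k-1)).toNat / 2 = m' := by omega
      have h3 : ((↑n:ℤ) + (k+1)).toNat / 2 = m' + 1 := by omega
      rw [if_pos (by push_cast; omega), if_pos (by omega), if_pos (by omega), h1, h2, h3]
      rw [Nat.choose_succ_succ]
      push_cast
      ring
    · by_cases hedge : k = -(n:ℤ) - 1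
      · subst hedge
        rw [if_pos (by push_cast; omega), if_neg (by omega), if_pos (by omega)]
        have h1 : ((↑(n+1):ℤ) + (-(n:ℤ)-1)).toNat / 2 = 0 := by push_cast; omega
        have h3 : ((↑n:ℤ) + (-(n:ℤ)-1+1)).toNat / 2 = 0 := by omega
        rw [h1, h3]
        simp
        ring
      · rw [if_neg (by push_cast; omega), if_neg (by omega), if_neg (by omega)]
        norm_num
  · rw [if_neg (by push_cast; omega), if_neg (by omega), if_neg (by omega)]
    norm_num

lemma srwP_two (n : ℕ) (x : Fin 2 → ℤ) :
    srwP 2 n x = gg n (x 0 + x 1) * gg n (x 0 - x 1) := by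
  induction n generalizing x with
  | zero =>
    rw [srwP, gg_zero, gg_zero]
    by_cases hx : x = 0
    · subst hx; norm_num
    · rw [if_neg hx]
      have : ¬ (x 0 + x 1 = 0 ∧ x 0 - x 1 = 0) := by
        intro ⟨h1, h2⟩
        apply hx
        funext j
        fin_cases j <;> [skip; skip] <;> simp <;> omega
      rcases not_and_or.mp this with h | h
      · rw [if_neg h]; ring
      · rw [if_neg h]; ring
  | succ n ih =>
    rw [srwP]
    rw [Fintype.sum_prod_type]
    rw [Fin.sum_univ_two]
    have e0t : x - srwStep 2 (0, true) = fun j => x j - (if j = 0 then 1 else 0) := by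
      funext j; simp [srwStep]
    have e0f : x - srwStep 2 (0, false) = fun j => x j - (if j = 0 then -1 else 0) := by
      funext j; simp [srwStep]
    have e1t : x - srwStep 2 (1, true) = fun j => x j - (if j = 1 then 1 else 0) := by
      funext j; simp [srwStep]
    have e1f : x - srwStep 2 (1, false) = fun j => x j - (if j = 1 then -1 else 0) := by
      funext j; simp [srwStep]
    simp only [Fintype.sum_bool]
    rw [e0t, e0f, e1t, e1f, ih, ih, ih, ih]
    norm_num
    rw [gg_rec, gg_rec]
    ring_nf

lemma gg_even_zero (n : ℕ) : gg (2*n) 0 = (n.centralBinom : ℝ) / 4^n := by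
  unfold gg
  rw [if_pos (by omega)]
  have h1 : ((↑(2*n):ℤ) + 0).toNat / 2 = n := by omega
  rw [h1]
  have : ((2:ℝ))^(2*n) = 4^n := by rw [pow_mul]; norm_num
  rw [this, Nat.centralBinom]

lemma cb_sq_bound (n : ℕ) : (2*n+1) * n.centralBinom^2 ≤ 16^n := by
  induction n with
  | zero => simp [Nat.centralBinom]
  | succ n ih =>
    have key := Nat.succ_mul_centralBinom_succ n
    have h1 : (n+1)^2 * ((2*(n+1)+1) * (n+1).centralBinom^2) ≤ (n+1)^2 * 16^(n+1) := by
      have e1 : (n+1)^2 * ((2*(n+1)+1) * (n+1).centralBinom^2)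
          = (2*n+3) * ((n+1) * (n+1).centralBinom)^2 := by ring
      rw [e1, key]
      have e2 : (2*n+3) * (2 * (2*n+1) * n.centralBinom)^2
          = (4*(2*n+1)*(2*n+3)) * ((2*n+1) * n.centralBinom^2) := by ring
      rw [e2]
      calc (4*(2*n+1)*(2*n+3)) * ((2*n+1) * n.centralBinom^2)
          ≤ (4*(2*n+1)*(2*n+3)) * 16^n := Nat.mul_le_mul_left _ ih
        _ ≤ (16*(n+1)^2) * 16^n := Nat.mul_le_mul_right _ (by nlinarith)
        _ = (n+1)^2 * 16^(n+1) := by ring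
    exact Nat.le_of_mul_le_mul_left h1 (by positivity)

lemma gg_even_zero_sq_le (n : ℕ) (hn : 1 ≤ n) : gg (2*n) 0 ^ 2 ≤ 1 / (2*n) := by
  rw [gg_even_zero]
  rw [div_pow]
  have h16 : ((4:ℝ)^n)^2 = 16^n := by rw [← pow_mul, pow_mul']; norm_num
  rw [h16]
  rw [div_le_div_iff₀ (by positivity) (by positivity)]
  have := cb_sq_bound n
  have hcast : (2*(n:ℝ)+1) * (n.centralBinom : ℝ)^2 ≤ (16:ℝ)^n := by exact_mod_cast this
  nlinarith [hcast, sq_nonneg ((n.centralBinom : ℝ))]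

lemma srwP_ret (n : ℕ) : srwP 2 (2*n) 0 = gg (2*n) 0 ^ 2 := by
  rw [srwP_two]
  norm_num
  ring

lemma sum_inv_le_log (N : ℕ) (hN : 1 ≤ N) :
    ∑ n ∈ Finset.Icc 1 N, (1:ℝ)/n ≤ 1 + Real.log N := by
  induction N with
  | zero => omega
  | succ N ih =>
    rcases Nat.eq_or_lt_of_le hN with h | h
    · simp [← h]
    · have hN1 : 1 ≤ N := by omega
      have hNpos : (0:ℝ) < N := by positivity
      rw [Finset.sum_Icc_succ_top (by omega)]
      have hlog : (1:ℝ)/(N+1) ≤ Real.log (N+1) - Real.log N := by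
        rw [← Real.log_div (by positivity) (by positivity)]
        have h2 : Real.log ((N:ℝ)/(N+1)) ≤ (N:ℝ)/(N+1) - 1 :=
          Real.log_le_sub_one_of_pos (by positivity)
        have h3 : Real.log ((N:ℝ)/(N+1)) = - Real.log ((N+1:ℝ)/N) := by
          rw [← Real.log_inv]; congr 1; field_simp
        have h4 : (N:ℝ)/(N+1) - 1 = -(1/(N+1)) := by field_simp; ring
        rw [h3, h4] at h2
        have := neg_le_neg h2
        simp only [neg_neg] at this
        exact this
      have := ih hN1
      push_cast
      push_cast at hlog
      linarith

lemma Rfun_lower (N : ℕ) (hN : 1 ≤ N) : (1/4 : ℝ) ≤ Rfun N := by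
  unfold Rfun
  have h1 : srwP 2 (2*1) 0 = (1/4 : ℝ) := by
    rw [srwP_ret, gg_even_zero]
    norm_num [Nat.centralBinom]
  calc (1/4 : ℝ) = srwP 2 (2*1) 0 := h1.symm
    _ ≤ ∑ n ∈ Finset.Icc 1 N, srwP 2 (2*n) 0 := by
        apply Finset.single_le_sum (f := fun n => srwP 2 (2*n) 0)
        · intro n _
          rw [srwP_ret]
          positivity
        · simp [hN]

lemma Rfun_upper (N : ℕ) (hN : 3 ≤ N) : Rfun N ≤ Real.log N := by
  have hlogN : 1 ≤ Real.log N := by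
    have h3 : Real.exp 1 ≤ 3 := by
      have := Real.exp_one_lt_d9
      linarith
    have : Real.exp 1 ≤ (N:ℝ) := by
      have : (3:ℝ) ≤ N := by exact_mod_cast hN
      linarith
    calc (1:ℝ) = Real.log (Real.exp 1) := (Real.log_exp 1).symm
      _ ≤ Real.log N := Real.log_le_log (Real.exp_pos 1) this
  have h1 : Rfun N ≤ ∑ n ∈ Finset.Icc 1 N, (1:ℝ)/(2*n) := by
    unfold Rfun
    apply Finset.sum_le_sum
    intro n hn
    rw [srwP_ret]
    have hn1 : 1 ≤ n := (Finset.mem_Icc.mp hn).1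
    exact gg_even_zero_sq_le n hn1
  have h2 : ∑ n ∈ Finset.Icc 1 N, (1:ℝ)/(2*n) = (∑ n ∈ Finset.Icc 1 N, (1:ℝ)/n) / 2 := by
    rw [Finset.sum_div]
    apply Finset.sum_congr rfl
    intro n _
    field_simp
  have h3 := sum_inv_le_log N (by omega)
  calc Rfun N ≤ (∑ n ∈ Finset.Icc 1 N, (1:ℝ)/n) / 2 := by rw [← h2]; exact h1
    _ ≤ (1 + Real.log N)/2 := by linarith
    _ ≤ Real.log N := by linarith

/-! ### Auxiliary lemmas: Gaussian computations -/

open Real in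
lemma gauss_pdf_mul (t : ℝ) (x : ℝ) :
    gaussianPDFReal 0 1 x * Real.exp (t * x)
      = Real.exp (t^2/2) * ((Real.sqrt (2*π))⁻¹ * Real.exp (-(1/2) * (x - t)^2)) := by
  unfold gaussianPDFReal
  simp only [NNReal.coe_one, mul_one, sub_zero]
  rw [mul_assoc, ← Real.exp_add]
  rw [show Real.exp (t^2/2) * ((Real.sqrt (2*π))⁻¹ * Real.exp (-(1/2) * (x - t)^2))
      = (Real.sqrt (2*π))⁻¹ * Real.exp (t^2/2 + -(1/2) * (x - t)^2) from by
    rw [Real.exp_add]; ring]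
  congr 1
  ring

lemma pdf_smul_eq (t : ℝ) : (fun x => (gaussianPDFReal 0 1 x).toNNReal • Real.exp (t * x))
      = fun x => gaussianPDFReal 0 1 x * Real.exp (t * x) := by
  funext x
  rw [NNReal.smul_def, Real.coe_toNNReal _ (gaussianPDFReal_nonneg 0 1 x), smul_eq_mul]

lemma integrable_gauss_exp_aux (t : ℝ) :
    Integrable (fun x => gaussianPDFReal 0 1 x * Real.exp (t * x)) := by
  simp only [gauss_pdf_mul t]
  apply Integrable.const_mul
  apply Integrable.const_mul
  have h : Integrable (fun x : ℝ => Real.exp (-(1/2) * x^2)) :=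
    integrable_exp_neg_mul_sq (by norm_num)
  have := h.comp_sub_right t
  simpa using this

open Real in
lemma integral_gauss_exp_aux (t : ℝ) :
    ∫ x, gaussianPDFReal 0 1 x * Real.exp (t * x) = Real.exp (t^2/2) := by
  simp only [gauss_pdf_mul t]
  rw [integral_const_mul, integral_const_mul]
  have h1 : ∫ x : ℝ, Real.exp (-(1/2) * (x - t)^2) = ∫ x : ℝ, Real.exp (-(1/2) * x^2) :=
    integral_sub_right_eq_self (fun x => Real.exp (-(1/2) * x^2)) t
  rw [h1, integral_gaussian]
  have : Real.sqrt (π / (1/2)) = Real.sqrt (2*π) := by norm_num [mul_comm]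
  rw [this, inv_mul_cancel₀ (by positivity), mul_one]

lemma integrable_exp_gaussianReal (t : ℝ) :
    Integrable (fun y => Real.exp (t * y)) (gaussianReal 0 1) := by
  rw [gaussianReal_of_var_ne_zero 0 one_ne_zero]
  have hm : Measurable fun x => (gaussianPDFReal 0 1 x).toNNReal :=
    (measurable_gaussianPDFReal 0 1).real_toNNReal
  have hd : gaussianPDF 0 1 = fun x => ((gaussianPDFReal 0 1 x).toNNReal : ENNReal) := by
    funext x; rfl
  rw [hd, integrable_withDensity_iff_integrable_smul hm, pdf_smul_eq t]
  exact integrable_gauss_exp_aux t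

lemma integral_exp_gaussianReal (t : ℝ) :
    ∫ y, Real.exp (t * y) ∂(gaussianReal 0 1) = Real.exp (t^2/2) := by
  rw [gaussianReal_of_var_ne_zero 0 one_ne_zero]
  have hm : Measurable fun x => (gaussianPDFReal 0 1 x).toNNReal :=
    (measurable_gaussianPDFReal 0 1).real_toNNReal
  have hd : gaussianPDF 0 1 = fun x => ((gaussianPDFReal 0 1 x).toNNReal : ENNReal) := by
    funext x; rfl
  rw [hd, integral_withDensity_eq_integral_smul hm, pdf_smul_eq t]
  exact integral_gauss_exp_aux t

section ProbAux

variable {Ω : Type*} [MeasurableSpace Ω] (P : Measure Ω) [IsProbabilityMeasure P]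
  (ω : ℕ × ℤ × ℤ → Ω → ℝ) (hmeas : ∀ i, Measurable (ω i))
  (hindep : iIndepFun ω P)
  (hgauss : ∀ i, Measure.map (ω i) P = gaussianReal 0 1)

include hmeas hgauss

omit [IsProbabilityMeasure P] in
lemma exp_single_integrable (t : ℝ) (j : ℕ × ℤ × ℤ) :
    Integrable (fun x => Real.exp (t * ω j x)) P := by
  have h := (integrable_map_measure (μ := P) (f := ω j)
    (g := fun y => Real.exp (t * y)) ?_ (hmeas j).aemeasurable).mp ?_
  · exact h
  · rw [hgauss j]; exact (integrable_exp_gaussianReal t).aestronglyMeasurable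
  · rw [hgauss j]; exact integrable_exp_gaussianReal t

omit [IsProbabilityMeasure P] in
lemma mgf_single (t : ℝ) (j : ℕ × ℤ × ℤ) : mgf (ω j) P t = Real.exp (t^2/2) := by
  rw [mgf]
  have : ∫ x, Real.exp (t * ω j x) ∂P = ∫ y, Real.exp (t * y) ∂(Measure.map (ω j) P) :=
    (integral_map (hmeas j).aemeasurable (by
      rw [hgauss j]; exact (integrable_exp_gaussianReal t).aestronglyMeasurable)).symm
  rw [this, hgauss j, integral_exp_gaussianReal]

include hindep

lemma exp_sum_integrable (t : ℝ) (s : Finset (ℕ × ℤ × ℤ)) :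
    Integrable (fun x => Real.exp (t * (∑ j ∈ s, ω j) x)) P :=
  hindep.integrable_exp_mul_sum hmeas (fun j _ => exp_single_integrable P ω hmeas hgauss t j)

lemma exp_sum_integral (t : ℝ) (s : Finset (ℕ × ℤ × ℤ)) :
    ∫ x, Real.exp (t * (∑ j ∈ s, ω j) x) ∂P = Real.exp (t^2/2) ^ s.card := by
  have h := hindep.mgf_sum hmeas s (t := t)
  rw [mgf] at h
  calc ∫ x, Real.exp (t * (∑ j ∈ s, ω j) x) ∂P = ∏ j ∈ s, mgf (ω j) P t := h
    _ = Real.exp (t^2/2) ^ s.card := by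
        rw [Finset.prod_congr rfl fun j _ => mgf_single P ω hmeas hgauss t j,
          Finset.prod_const]

end ProbAux

/-! ### Path lemmas -/

lemma pathPos_succ {N : ℕ} (σ : Fin N → Fin 4) (n : ℕ) (hn : n < N) :
    pathPos σ (n+1) = pathPos σ n + step4 (σ ⟨n, hn⟩) := by
  unfold pathPos
  have : ∀ k : Fin N, (if (k:ℕ) < n + 1 then step4 (σ k) else 0)
      = (if (k:ℕ) < n then step4 (σ k) else 0) + (if k = ⟨n, hn⟩ then step4 (σ k) else 0) := by
    intro k
    by_cases h1 : (k:ℕ) < n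
    · rw [if_pos (by omega), if_pos h1, if_neg (by intro h; subst h; simp at h1)]
      simp
    · by_cases h2 : (k:ℕ) = n
      · rw [if_pos (by omega), if_neg h1, if_pos (by exact Fin.ext h2)]
        simp
      · rw [if_neg (by omega), if_neg h1, if_neg (by intro h; subst h; simp at h2)]
        simp
  rw [Finset.sum_congr rfl fun k _ => this k, Finset.sum_add_distrib]
  congr 1
  rw [Finset.sum_ite_eq' Finset.univ ⟨n, hn⟩ (fun k => step4 (σ k))]
  simp

lemma pathPos_const {N : ℕ} (m : ℕ) (hm : m ≤ N) :
    pathPos (fun _ : Fin N => (0 : Fin 4)) m = ((m : ℤ), 0) := by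
  induction m with
  | zero => simp [pathPos]; rfl
  | succ m ih =>
    rw [pathPos_succ _ m (by omega), ih (by omega)]
    simp [step4]

/-! ### Main theorem -/

set_option maxHeartbeats 1600000 in
/-- Fix `β̂ > 0`. There exist `c₀ = c₀(β̂) > 0` and `c₁ = c₁(β̂) > 0` such that for all
`N` large and all integers `q ≥ 2` with `q² ≥ c₁ (log N)²`, the `q`-th moment of the
polymer partition function (at `β_N = β̂ / √R_N`, in an i.i.d. standard Gaussian
environment) satisfies `E[W_N^q] ≥ exp(c₀ (q choose 2) N / log N)`. -/
theorem polymer_moment_lower_bound_q_large {Ω : Type*} [MeasurableSpace Ω]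
    (P : Measure Ω) [IsProbabilityMeasure P]
    (ω : ℕ × ℤ × ℤ → Ω → ℝ) (hmeas : ∀ i, Measurable (ω i))
    (hindep : iIndepFun ω P)
    (hgauss : ∀ i, Measure.map (ω i) P = gaussianReal 0 1)
    (βhat : ℝ) (hβhat : 0 < βhat) :
    ∃ c₀ > (0 : ℝ), ∃ c₁ > (0 : ℝ), ∃ N₀ : ℕ, ∀ N : ℕ, N₀ ≤ N → ∀ q : ℕ, 2 ≤ q →
      c₁ * (Real.log N) ^ 2 ≤ (q : ℝ) ^ 2 →
      Real.exp (c₀ * (q.choose 2) * N / Real.log N) ≤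
        ∫ x, (polymerW N (βhat / Real.sqrt (Rfun N)) (fun i => ω i x)) ^ q ∂P := by
  have hlog4 : 0 ≤ Real.log 4 := Real.log_nonneg (by norm_num)
  have hb2 : (0:ℝ) < βhat^2 := by positivity
  refine ⟨βhat^2/2, by positivity, (8*Real.log 4/βhat^2 + 1)^2, by positivity, 3, ?_⟩
  intro N hN3 q hq2 hq1
  -- basic facts about R and L
  set L : ℝ := Real.log N with hL
  set R : ℝ := Rfun N with hR
  have hL1 : 1 ≤ L := by
    have h3 : Real.exp 1 ≤ 3 := by have := Real.exp_one_lt_d9; linarith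
    have h3N : (3:ℝ) ≤ N := by exact_mod_cast hN3
    calc (1:ℝ) = Real.log (Real.exp 1) := (Real.log_exp 1).symm
      _ ≤ Real.log N := Real.log_le_log (Real.exp_pos 1) (by linarith)
  have hL0 : 0 < L := by linarith
  have hR14 : (1/4 : ℝ) ≤ R := Rfun_lower N (by omega)
  have hR0 : 0 < R := by linarith
  have hRL : R ≤ L := Rfun_upper N hN3
  set β : ℝ := βhat / Real.sqrt R with hβ
  have hβsq : β^2 = βhat^2 / R := by
    rw [hβ, div_pow, Real.sq_sqrt hR0.le]
  -- the path family and index sets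
  set f : (Fin N → Fin 4) → ℕ → ℕ × ℤ × ℤ := fun σ n => (n + 1, pathPos σ (n + 1)) with hf
  have hfinj : ∀ σ, Set.InjOn (f σ) (Finset.range N) := by
    intro σ a _ b _ hab
    have := congrArg Prod.fst hab
    simpa [hf] using this
  set s : (Fin N → Fin 4) → Finset (ℕ × ℤ × ℤ) := fun σ => (Finset.range N).image (f σ) with hs
  have hcard : ∀ σ, (s σ).card = N := by
    intro σ
    rw [hs, Finset.card_image_of_injOn (hfinj σ), Finset.card_range]
  set A : (Fin N → Fin 4) → Ω → ℝ := fun σ x =>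
    Real.exp ((∑ n ∈ Finset.range N, β * ω (n + 1, pathPos σ (n + 1)) x) - N * β^2/2) with hA
  -- rewrite powers of A
  have hA_pow : ∀ σ x, A σ x ^ q
      = Real.exp (-((q:ℝ) * ((N:ℝ) * β^2/2))) * Real.exp (((q:ℝ)*β) * (∑ j ∈ s σ, ω j) x) := by
    intro σ x
    rw [hA]
    rw [← Real.exp_nat_mul, ← Real.exp_add]
    congr 1
    have hsum : ∑ n ∈ Finset.range N, β * ω (n + 1, pathPos σ (n + 1)) x
        = β * ∑ j ∈ s σ, ω j x := by
      rw [Finset.mul_sum, hs, Finset.sum_image (fun a ha b hb hab => hfinj σ ha hb hab)]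
    rw [hsum, Finset.sum_apply]
    ring
  -- integrability and value of ∫ A^q
  have hAq_int : ∀ σ, Integrable (fun x => A σ x ^ q) P := by
    intro σ
    simp only [hA_pow σ]
    exact (exp_sum_integrable P ω hmeas hindep hgauss ((q:ℝ)*β) (s σ)).const_mul _
  have hAq_val : ∀ σ, ∫ x, A σ x ^ q ∂P
      = Real.exp (-((q:ℝ) * ((N:ℝ) * β^2/2))) * Real.exp (((q:ℝ)*β)^2/2) ^ N := by
    intro σ
    simp only [hA_pow σ]
    rw [integral_const_mul, exp_sum_integral P ω hmeas hindep hgauss ((q:ℝ)*β) (s σ), hcard σ]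
  -- W as a sum of the A's
  have hW_eq : ∀ x, polymerW N β (fun i => ω i x) = (∑ σ, A σ x) / 4^N := by
    intro x; rfl
  have hA_pos : ∀ σ (x : Ω), 0 < A σ x := fun σ x => Real.exp_pos _
  -- integrability of W^q
  have hWmeas : Measurable fun x => polymerW N β (fun i => ω i x) := by
    simp only [hW_eq]
    apply Measurable.div_const
    apply Finset.measurable_sum
    intro σ _
    apply Measurable.exp
    apply Measurable.sub
    · exact Finset.measurable_sum _ (fun n _ => ((hmeas _).const_mul β))
    · exact measurable_const
  have hcard_univ : (0:ℝ) < ((Finset.univ : Finset (Fin N → Fin 4)).card : ℝ) := by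
    have : 0 < (Finset.univ : Finset (Fin N → Fin 4)).card :=
      Finset.card_pos.mpr ⟨fun _ => 0, Finset.mem_univ _⟩
    exact_mod_cast this
  have hpow_sum : ∀ x, (∑ σ, A σ x) ^ q
      ≤ ((Finset.univ : Finset (Fin N → Fin 4)).card : ℝ)^(q-1) * ∑ σ, A σ x ^ q := by
    intro x
    have h := pow_sum_div_card_le_sum_pow (f := fun σ => A σ x)
      (s := Finset.univ) (fun σ _ => (hA_pos σ x).le) (q - 1)
    have hq' : q - 1 + 1 = q := by omega
    rw [hq'] at h
    rw [div_le_iff₀ (by positivity)] at h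
    calc (∑ σ, A σ x) ^ q ≤ (∑ σ, A σ x ^ q) * ((Finset.univ : Finset (Fin N → Fin 4)).card : ℝ)^(q-1) := h
      _ = ((Finset.univ : Finset (Fin N → Fin 4)).card : ℝ)^(q-1) * ∑ σ, A σ x ^ q := by ring
  have hWq_int : Integrable (fun x => polymerW N β (fun i => ω i x) ^ q) P := by
    apply Integrable.mono'
      (g := fun x => (((Finset.univ : Finset (Fin N → Fin 4)).card : ℝ)^(q-1)
        * ∑ σ, A σ x ^ q) / (4:ℝ)^(N*q))
    · exact ((integrable_finset_sum Finset.univ (fun σ _ => hAq_int σ)).const_mul _).div_const _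
    · exact (hWmeas.pow_const q).aestronglyMeasurable
    · apply ae_of_all
      intro x
      have hWnn : 0 ≤ polymerW N β (fun i => ω i x) := by
        rw [hW_eq]
        positivity
      rw [Real.norm_eq_abs, abs_of_nonneg (by positivity)]
      rw [hW_eq, div_pow, ← pow_mul]
      gcongr
      exact hpow_sum x
  -- lower bound by the constant path
  set σ0 : Fin N → Fin 4 := fun _ => 0 with hσ0
  have hlow_int : Integrable (fun x => (A σ0 x / 4^N)^q) P := by
    simp only [div_pow]
    exact (hAq_int σ0).div_const _
  have hlow_le : ∀ x, (A σ0 x / 4^N)^q ≤ polymerW N β (fun i => ω i x) ^ q := by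
    intro x
    rw [hW_eq]
    have h1 : A σ0 x ≤ ∑ σ, A σ x :=
      Finset.single_le_sum (fun σ _ => (hA_pos σ x).le) (Finset.mem_univ σ0)
    gcongr
  have hmono := integral_mono hlow_int hWq_int hlow_le
  refine le_trans ?_ hmono
  have hval : ∫ x, (A σ0 x / 4^N)^q ∂P
      = (Real.exp (-((q:ℝ)*((N:ℝ)*β^2/2))) * Real.exp (((q:ℝ)*β)^2/2)^N) / ((4:ℝ)^N)^q := by
    simp only [div_pow]
    rw [integral_div, hAq_val σ0]
  rw [hval]
  have h4 : ((4:ℝ)^N)^q = Real.exp ((↑(N*q) : ℝ) * Real.log 4) := by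
    rw [Real.exp_nat_mul, Real.exp_log (by norm_num : (0:ℝ) < 4), pow_mul]
  have h5 : Real.exp (((q:ℝ)*β)^2/2)^N = Real.exp ((N:ℝ) * (((q:ℝ)*β)^2/2)) :=
    (Real.exp_nat_mul _ N).symm
  rw [h5, h4, ← Real.exp_add, ← Real.exp_sub, Real.exp_le_exp, Nat.cast_choose_two]
  push_cast
  -- the numeric inequality
  have e1 : -((q:ℝ)*((N:ℝ)*β^2/2)) + (N:ℝ)*(((q:ℝ)*β)^2/2) - (N:ℝ)*(q:ℝ)*Real.log 4
      = (N:ℝ)*β^2*((q:ℝ)*((q:ℝ)-1))/2 - (N:ℝ)*(q:ℝ)*Real.log 4 := by ring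
  rw [e1, hβsq]
  have hq2' : (2:ℝ) ≤ (q:ℝ) := by exact_mod_cast hq2
  have hNnn : (0:ℝ) ≤ (N:ℝ) := Nat.cast_nonneg N
  -- from the hypothesis on q
  have hq' : (8*Real.log 4/βhat^2 + 1) * L ≤ (q:ℝ) := by
    have hsq : ((8*Real.log 4/βhat^2 + 1) * L)^2 ≤ ((q:ℝ))^2 := by
      calc ((8*Real.log 4/βhat^2 + 1) * L)^2 = (8*Real.log 4/βhat^2 + 1)^2 * L^2 := by ring
        _ ≤ (q:ℝ)^2 := hq1
    have hnn : (0:ℝ) ≤ (8*Real.log 4/βhat^2 + 1) * L := by positivity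
    have h := Real.sqrt_le_sqrt hsq
    rwa [Real.sqrt_sq hnn, Real.sqrt_sq (by positivity : (0:ℝ) ≤ (q:ℝ))] at h
  have hq1' : 8*Real.log 4/βhat^2*L ≤ (q:ℝ) - 1 := by nlinarith [hq', hL1]
  have key : Real.log 4 * (4*L) ≤ ((q:ℝ)-1)*βhat^2 := by
    have h := mul_le_mul_of_nonneg_right hq1' hb2.le
    have e : 8*Real.log 4/βhat^2*L*βhat^2 = 8*Real.log 4*L := by field_simp
    rw [e] at h
    linarith [h, mul_nonneg hlog4 hL0.le]
  have hkey2 : Real.log 4 ≤ ((q:ℝ)-1)*βhat^2/(4*L) := by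
    rw [le_div_iff₀ (by positivity)]
    linarith [key]
  have hdivL : βhat^2/L ≤ βhat^2/R := by gcongr
  have hstep : (N:ℝ)*(βhat^2/L)*((q:ℝ)*((q:ℝ)-1))/2 ≤ (N:ℝ)*(βhat^2/R)*((q:ℝ)*((q:ℝ)-1))/2 := by
    have hqq : (0:ℝ) ≤ (q:ℝ)*((q:ℝ)-1) := by nlinarith [hq2']
    have := mul_le_mul_of_nonneg_right (mul_le_mul_of_nonneg_left hdivL hNnn) hqq
    linarith [this]
  have hdiff : (N:ℝ)*(βhat^2/L)*((q:ℝ)*((q:ℝ)-1))/2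
        - βhat^2/2*((q:ℝ)*((q:ℝ)-1)/2)*(N:ℝ)/L - (N:ℝ)*(q:ℝ)*Real.log 4
      = ((N:ℝ)*(q:ℝ))*(((q:ℝ)-1)*βhat^2/(4*L) - Real.log 4) := by
    field_simp
    ring
  have hprod : (0:ℝ) ≤ ((N:ℝ)*(q:ℝ))*(((q:ℝ)-1)*βhat^2/(4*L) - Real.log 4) := by
    apply mul_nonneg (by positivity)
    linarith [hkey2]
  linarith [hdiff, hprod, hstep]
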